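/- Let a, b ≥ 2 be integers, let R be a commutative ℚ-algebra, let u_0, …, u_a ∈ R, set U(Y) = Σ_{j=0}^{a} u_j Y^j ∈ R[Y], and define v_m(Y) ∈ R[Y] by the recursion in the context. Let c ≥ 1 be an integer, let X be another indeterminate, and in the polynomial ring R[X,Y,Z] set W = Y + Z·(Z^c·X + U(Y))^b. Then Z^{c+1} divides U(Y) − Σ_{k=0}^{c−1} v_k(W)·Z^k − v_c(Y)·Z^c in R[X,Y,Z], where v_k(W) denotes the substitution of W for Y in v_k. -/
import Mathlib

noncomputable section

/-- The polynomials `v_m`: `v_0 = U` and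
`v_m = −Σ_{j=1}^{m} (U^{bj}/j!)·v_{m−j}^{(j)}` for `m ≥ 1`. -/
noncomputable def vpoly {R : Type*} [CommRing R] [Algebra ℚ R]
    (b : ℕ) (U : Polynomial R) : ℕ → Polynomial R
  | 0 => U
  | m + 1 =>
      -∑ j ∈ Finset.range (m + 1),
        Polynomial.C (algebraMap ℚ R (1 / ((j + 1).factorial : ℚ))) * U ^ (b * (j + 1)) *
          Polynomial.derivative^[j + 1] (vpoly b U (m - j))
  decreasing_by exact Nat.lt_succ_of_le (Nat.sub_le m j)

open Polynomial Finset

lemma map_hasseDeriv' {R S : Type*} [CommRing R] [CommRing S] (φ : R →+* S) (k : ℕ)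
    (p : Polynomial R) : (hasseDeriv k p).map φ = hasseDeriv k (p.map φ) := by
  ext n
  simp [hasseDeriv_coeff, coeff_map]

lemma hasse_eq {R : Type*} [CommRing R] [Algebra ℚ R] (k : ℕ) (P : Polynomial R) :
    Polynomial.C (algebraMap ℚ R (1 / (k.factorial : ℚ))) * Polynomial.derivative^[k] P
      = hasseDeriv k P := by
  have h : Polynomial.derivative^[k] P = k.factorial • hasseDeriv k P := by
    rw [← factorial_smul_hasseDeriv]; rfl
  rw [h, nsmul_eq_mul, ← mul_assoc]
  have h2 : ((k.factorial : Polynomial R)) = Polynomial.C ((k.factorial : R)) := by simp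
  rw [h2, ← Polynomial.C_mul]
  have h3 : (k.factorial : R) = algebraMap ℚ R (k.factorial : ℚ) := by simp
  rw [h3, ← map_mul]
  have h4 : (1 / (k.factorial : ℚ)) * (k.factorial : ℚ) = 1 := by field_simp
  rw [h4]; simp

lemma eval_add_hasse {A : Type*} [CommRing A] (f : Polynomial A) (y e : A) {n : ℕ}
    (hn : f.natDegree < n) :
    f.eval (y + e) = ∑ j ∈ range n, (hasseDeriv j f).eval y * e ^ j := by
  rw [add_comm, ← taylor_eval, Polynomial.eval_eq_sum_range' (by rwa [natDegree_taylor])]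
  exact Finset.sum_congr rfl fun j _ => by rw [taylor_coeff]

lemma aeval_add_hasse {R A : Type*} [CommRing R] [CommRing A] [Algebra R A]
    (P : Polynomial R) (y e : A) {n : ℕ} (hn : P.natDegree < n) :
    Polynomial.aeval (y + e) P
      = ∑ j ∈ range n, Polynomial.aeval y (hasseDeriv j P) * e ^ j := by
  rw [Polynomial.aeval_def, ← Polynomial.eval_map,
    eval_add_hasse _ y e (lt_of_le_of_lt natDegree_map_le hn)]
  refine Finset.sum_congr rfl fun j _ => ?_
  rw [← map_hasseDeriv', Polynomial.eval_map, ← Polynomial.aeval_def]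

lemma rec_sum {R : Type*} [CommRing R] [Algebra ℚ R] (b : ℕ) (U : Polynomial R)
    (m : ℕ) (hm : 1 ≤ m) :
    ∑ j ∈ range (m + 1), U ^ (b * j) * hasseDeriv j (vpoly b U (m - j)) = 0 := by
  obtain ⟨m, rfl⟩ : ∃ m', m = m' + 1 := ⟨m - 1, by omega⟩
  rw [Finset.sum_range_succ']
  have h0 : U ^ (b * 0) * hasseDeriv 0 (vpoly b U (m + 1 - 0)) = vpoly b U (m + 1) := by
    simp [hasseDeriv_zero']
  rw [h0]
  have h1 : vpoly b U (m + 1)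
      = -∑ j ∈ Finset.range (m + 1),
          U ^ (b * (j + 1)) * hasseDeriv (j + 1) (vpoly b U (m - j)) := by
    rw [vpoly]
    congr 1
    refine Finset.sum_congr rfl fun j _ => ?_
    rw [← hasse_eq (j + 1) (vpoly b U (m - j))]
    ring
  have h2 : ∀ j ∈ Finset.range (m + 1),
      U ^ (b * (j + 1)) * hasseDeriv (j + 1) (vpoly b U (m + 1 - (j + 1)))
        = U ^ (b * (j + 1)) * hasseDeriv (j + 1) (vpoly b U (m - j)) := by
    intro j _
    have hmj : m + 1 - (j + 1) = m - j := by omega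
    rw [hmj]
  rw [Finset.sum_congr rfl h2, h1]
  ring

theorem zpow_dvd_truncation (R : Type*) [CommRing R] [Algebra ℚ R]
    (a b c : ℕ) (ha : 2 ≤ a) (hb : 2 ≤ b) (hc : 1 ≤ c)
    (u : ℕ → R) (U : Polynomial R)
    (hU : U = ∑ j ∈ Finset.range (a + 1), Polynomial.C (u j) * Polynomial.X ^ j) :
    (MvPolynomial.X (2 : Fin 3)) ^ (c + 1) ∣
      (Polynomial.aeval (MvPolynomial.X (1 : Fin 3)) U
        - ∑ k ∈ Finset.range c,
            Polynomial.aeval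
              (MvPolynomial.X (1 : Fin 3) + MvPolynomial.X (2 : Fin 3) *
                ((MvPolynomial.X (2 : Fin 3)) ^ c * MvPolynomial.X (0 : Fin 3)
                  + Polynomial.aeval (MvPolynomial.X (1 : Fin 3)) U) ^ b)
              (vpoly b U k) * (MvPolynomial.X (2 : Fin 3)) ^ k
        - Polynomial.aeval (MvPolynomial.X (1 : Fin 3)) (vpoly b U c) *
            (MvPolynomial.X (2 : Fin 3)) ^ c
        : MvPolynomial (Fin 3) R) := by
  classical
  set x : MvPolynomial (Fin 3) R := MvPolynomial.X 0 with hx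
  set y : MvPolynomial (Fin 3) R := MvPolynomial.X 1 with hy
  set z : MvPolynomial (Fin 3) R := MvPolynomial.X 2 with hz
  set Uy : MvPolynomial (Fin 3) R := Polynomial.aeval y U with hUy
  set t : MvPolynomial (Fin 3) R := z ^ c * x + Uy with ht
  set w : MvPolynomial (Fin 3) R := y + z * t ^ b with hw
  set F : ℕ → ℕ → MvPolynomial (Fin 3) R :=
    fun k j => Polynomial.aeval y (hasseDeriv j (vpoly b U k)) * Uy ^ (b * j) * z ^ (j + k)
    with hF
  -- Claim A
  have claimA : ∀ k, k ≤ c →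
      z ^ (c + 1) ∣ (∑ j ∈ range (c + 1 - k), F k j)
        - Polynomial.aeval w (vpoly b U k) * z ^ k := by
    intro k hk
    set M := max ((vpoly b U k).natDegree + 1) (c + 1 - k) with hM
    have hdeg : (vpoly b U k).natDegree < M :=
      lt_of_lt_of_le (Nat.lt_succ_self _) (le_max_left _ _)
    have hM2 : c + 1 - k ≤ M := le_max_right _ _
    have hexp : Polynomial.aeval w (vpoly b U k)
        = ∑ j ∈ range M,
            Polynomial.aeval y (hasseDeriv j (vpoly b U k)) * (z * t ^ b) ^ j := by
      rw [hw]; exact aeval_add_hasse _ y (z * t ^ b) hdeg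
    rw [hexp, Finset.sum_mul,
      ← Finset.sum_range_add_sum_Ico
        (fun j => Polynomial.aeval y (hasseDeriv j (vpoly b U k)) * (z * t ^ b) ^ j * z ^ k) hM2]
    have hre : (∑ j ∈ range (c + 1 - k), F k j)
        - ((∑ j ∈ range (c + 1 - k),
              Polynomial.aeval y (hasseDeriv j (vpoly b U k)) * (z * t ^ b) ^ j * z ^ k)
            + ∑ j ∈ Ico (c + 1 - k) M,
              Polynomial.aeval y (hasseDeriv j (vpoly b U k)) * (z * t ^ b) ^ j * z ^ k)
        = (∑ j ∈ range (c + 1 - k),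
            (F k j - Polynomial.aeval y (hasseDeriv j (vpoly b U k)) * (z * t ^ b) ^ j * z ^ k))
          + -(∑ j ∈ Ico (c + 1 - k) M,
              Polynomial.aeval y (hasseDeriv j (vpoly b U k)) * (z * t ^ b) ^ j * z ^ k) := by
      rw [Finset.sum_sub_distrib]; ring
    rw [hre]
    refine dvd_add (Finset.dvd_sum ?_) (dvd_neg.2 (Finset.dvd_sum ?_))
    · intro j hj
      rcases Nat.eq_zero_or_pos j with rfl | hjpos
      · simp [hF]
      · have hjk : j + k ≤ c := by
          have := Finset.mem_range.1 hj; omega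
        have hdvd1 : z ^ c ∣ (t ^ b) ^ j - (Uy ^ b) ^ j := by
          have h1 : t - Uy ∣ t ^ b - Uy ^ b := sub_dvd_pow_sub_pow t Uy b
          have h2 : t ^ b - Uy ^ b ∣ (t ^ b) ^ j - (Uy ^ b) ^ j :=
            sub_dvd_pow_sub_pow _ _ j
          have h3 : z ^ c ∣ t - Uy := ⟨x, by rw [ht]; ring⟩
          exact h3.trans (h1.trans h2)
        have hdvd2 : z ∣ z ^ (j + k) := dvd_pow_self z (by omega)
        have key : z ^ (c + 1) ∣ (z * t ^ b) ^ j * z ^ k - Uy ^ (b * j) * z ^ (j + k) := by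
          have heq : (z * t ^ b) ^ j * z ^ k - Uy ^ (b * j) * z ^ (j + k)
              = ((t ^ b) ^ j - (Uy ^ b) ^ j) * z ^ (j + k) := by
            rw [mul_pow, pow_add, pow_mul]; ring
          rw [heq, pow_succ]
          exact mul_dvd_mul hdvd1 hdvd2
        have heq2 : F k j
              - Polynomial.aeval y (hasseDeriv j (vpoly b U k)) * (z * t ^ b) ^ j * z ^ k
            = -(Polynomial.aeval y (hasseDeriv j (vpoly b U k))
                * ((z * t ^ b) ^ j * z ^ k - Uy ^ (b * j) * z ^ (j + k))) := by
          simp only [hF]; ring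
        rw [heq2]
        exact dvd_neg.2 (key.mul_left _)
    · intro j hj
      have hjk : c + 1 ≤ j + k := by
        have := (Finset.mem_Ico.1 hj).1; omega
      have heq : Polynomial.aeval y (hasseDeriv j (vpoly b U k)) * (z * t ^ b) ^ j * z ^ k
          = z ^ (j + k) * (Polynomial.aeval y (hasseDeriv j (vpoly b U k)) * (t ^ b) ^ j) := by
        rw [mul_pow, pow_add]; ring
      rw [heq]
      exact (pow_dvd_pow z hjk).mul_right _
  -- Claim B
  have claimB : ∑ k ∈ range (c + 1), ∑ j ∈ range (c + 1 - k), F k j = Uy := by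
    rw [← Finset.sum_range_diag_flip (c + 1) F]
    have hterm : ∀ m ∈ range (c + 1), ∑ i ∈ range (m + 1), F i (m - i)
        = Polynomial.aeval y
            (∑ j ∈ range (m + 1), U ^ (b * j) * hasseDeriv j (vpoly b U (m - j))) * z ^ m := by
      intro m _
      rw [map_sum, Finset.sum_mul,
        ← Finset.sum_range_reflect
          (fun j => Polynomial.aeval y (U ^ (b * j) * hasseDeriv j (vpoly b U (m - j))) * z ^ m)
          (m + 1)]
      refine Finset.sum_congr rfl fun i hi => ?_
      have hi' : i ≤ m := by have := Finset.mem_range.1 hi; omega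
      have h1 : m + 1 - 1 - i = m - i := by omega
      have h2 : m - (m - i) = i := Nat.sub_sub_self hi'
      have h3 : (m - i) + i = m := Nat.sub_add_cancel hi'
      simp only [hF, h1, h2, h3, map_mul, map_pow]
      rw [hUy]; ring
    rw [Finset.sum_congr rfl hterm]
    rw [Finset.sum_eq_single 0]
    · have : ∑ j ∈ range (0 + 1), U ^ (b * j) * hasseDeriv j (vpoly b U (0 - j)) = U := by
        simp [hasseDeriv_zero', vpoly]
      rw [this]; simp [hUy]
    · intro m _ hm0
      rw [rec_sum b U m (by omega)]
      simp
    · intro h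
      exact absurd (Finset.mem_range.2 (by omega)) h
  -- Assembly
  have hz1 : z ∣ w - y := ⟨t ^ b, by rw [hw]; ring⟩
  have h1 : w - y ∣ Polynomial.aeval w (vpoly b U c) - Polynomial.aeval y (vpoly b U c) := by
    rw [Polynomial.aeval_def, ← Polynomial.eval_map, Polynomial.aeval_def, ← Polynomial.eval_map]
    exact Polynomial.sub_dvd_eval_sub _ _ _
  have hzc : z ^ (c + 1) ∣
      (Polynomial.aeval w (vpoly b U c) - Polynomial.aeval y (vpoly b U c)) * z ^ c := by
    rw [mul_comm, pow_succ]
    exact mul_dvd_mul_left _ (hz1.trans h1)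
  have hfinal : Uy - (∑ k ∈ range c, Polynomial.aeval w (vpoly b U k) * z ^ k)
      - Polynomial.aeval y (vpoly b U c) * z ^ c
      = (∑ k ∈ range (c + 1),
          ((∑ j ∈ range (c + 1 - k), F k j) - Polynomial.aeval w (vpoly b U k) * z ^ k))
        + (Polynomial.aeval w (vpoly b U c) - Polynomial.aeval y (vpoly b U c)) * z ^ c := by
    rw [Finset.sum_sub_distrib, claimB, Finset.sum_range_succ]
    ring
  rw [hfinal]
  exact dvd_add
    (Finset.dvd_sum fun k hk => claimA k (by have := Finset.mem_range.1 hk; omega)) hzc
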